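/- arXiv:1706.09358 — 6 statements merged into one kernel-verified Lean document; each statement's English description precedes it below -/
import Mathlib

section
/- Let Λ be a small category with a degree functor d : Λ → ℕ^k, let β be an action of ℤ^l by automorphisms of Λ, and let Γ = Λ ×_β ℤ^l be the crossed-product category with morphisms Λ × ℕ^l and composition (μ,m)(ν,n) := (μ·β_m(ν), m+n). If f : Λ → 𝕋 is a functor satisfying f ∘ β_m = f for all m ∈ ℤ^l, then c_f((μ,m),(ν,n)) := f(ν)^{|m|}, where |m| = Σᵢ mᵢ, is a normalised 𝕋-valued 2-cocycle on Γ. -/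
/-- A small category presented algebraically on its set of morphisms: objects are
identified with identity morphisms, `r`/`s` are the range (codomain) and source
(domain) maps, and `comp lam mu` is the composite `lam ∘ mu`, meaningful when
`s lam = r mu`. -/
structure CategoryData (M : Type*) where
  r : M → M
  s : M → M
  comp : M → M → M
  rr : ∀ lam, r (r lam) = r lam
  sr : ∀ lam, s (r lam) = r lam
  rs : ∀ lam, r (s lam) = s lam
  ss' : ∀ lam, s (s lam) = s lam
  r_comp : ∀ {lam mu}, s lam = r mu → r (comp lam mu) = r lam
  s_comp : ∀ {lam mu}, s lam = r mu → s (comp lam mu) = s mu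
  comp_assoc : ∀ {lam mu nu}, s lam = r mu → s mu = r nu →
      comp (comp lam mu) nu = comp lam (comp mu nu)
  id_comp : ∀ lam, comp (r lam) lam = lam
  comp_id : ∀ lam, comp lam (s lam) = lam

/-- A normalised `𝕋`-valued 2-cocycle on a small category: (C1) the cocycle
identity on composable triples, and (C2) `c(λ, s(λ)) = c(r(λ), λ) = 1`. -/
def IsNormalisedCocycle {M : Type*} (C : CategoryData M) (c : M → M → Circle) : Prop :=
  (∀ lam mu nu, C.s lam = C.r mu → C.s mu = C.r nu →
      c lam mu * c (C.comp lam mu) nu = c lam (C.comp mu nu) * c mu nu) ∧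
  (∀ lam, c lam (C.s lam) = 1) ∧ (∀ lam, c (C.r lam) lam = 1)

/-- `β` is an action of `ℤ^l` by automorphisms of the small category `C`. -/
structure IsCatAction {M : Type*} (C : CategoryData M) {l : ℕ}
    (β : (Fin l → ℤ) → M → M) : Prop where
  map_zero : ∀ mu, β 0 mu = mu
  map_add : ∀ m n mu, β (m + n) mu = β m (β n mu)
  map_r : ∀ m mu, C.r (β m mu) = β m (C.r mu)
  map_s : ∀ m mu, C.s (β m mu) = β m (C.s mu)
  map_comp : ∀ m {mu nu}, C.s mu = C.r nu →
      β m (C.comp mu nu) = C.comp (β m mu) (β m nu)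

/-- The canonical coercion `ℕ^l → ℤ^l`. -/
def natToInt {l : ℕ} (m : Fin l → ℕ) : Fin l → ℤ := fun i => (m i : ℤ)

/-- `Γ` is the crossed-product category `Λ ×_β ℤ^l`: its morphisms are pairs
`(μ, m) ∈ Λ × ℕ^l`, with range `(r(μ), 0)`, source `(β₋ₘ(s(μ)), 0)` and
composition `(μ,m)(ν,n) = (μ·β_m(ν), m + n)`. -/
structure IsCrossedProduct {M : Type*} {l : ℕ} (C : CategoryData M)
    (β : (Fin l → ℤ) → M → M) (Γ : CategoryData (M × (Fin l → ℕ))) : Prop where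
  r_eq : ∀ p : M × (Fin l → ℕ), Γ.r p = (C.r p.1, 0)
  s_eq : ∀ p : M × (Fin l → ℕ), Γ.s p = (β (-(natToInt p.2)) (C.s p.1), 0)
  comp_eq : ∀ p q : M × (Fin l → ℕ), Γ.s p = Γ.r q →
      Γ.comp p q = (C.comp p.1 (β (natToInt p.2) q.1), p.2 + q.2)

/-- Let `Λ` be a small category with a degree functor
`d : Λ → ℕ^k`, `β` an action of `ℤ^l` by automorphisms of `Λ`, and
`Γ = Λ ×_β ℤ^l` the crossed-product category. If `f : Λ → 𝕋` is a functor with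
`f ∘ β_m = f` for all `m ∈ ℤ^l`, then `c_f((μ,m),(ν,n)) := f(ν)^{|m|}`, where
`|m| = Σᵢ mᵢ`, is a normalised `𝕋`-valued 2-cocycle on `Γ`. -/
theorem crossedProduct_cocycle_from_invariant_functor
    {M : Type*} {k l : ℕ} (C : CategoryData M)
    -- the degree functor `d : Λ → ℕ^k`
    (d : M → Fin k → ℕ)
    (hd_comp : ∀ {mu nu}, C.s mu = C.r nu → d (C.comp mu nu) = d mu + d nu)
    (hd_r : ∀ mu, d (C.r mu) = 0) (hd_s : ∀ mu, d (C.s mu) = 0)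
    -- the action `β` of `ℤ^l` by automorphisms of `Λ`
    (β : (Fin l → ℤ) → M → M) (hβ : IsCatAction C β)
    (hβbij : ∀ m, Function.Bijective (β m))
    (hβd : ∀ m mu, d (β m mu) = d mu)
    -- the crossed-product category `Γ = Λ ×_β ℤ^l`
    (Γ : CategoryData (M × (Fin l → ℕ))) (hΓ : IsCrossedProduct C β Γ)
    -- the functor `f : Λ → 𝕋` with `f ∘ β_m = f`
    (f : M → Circle)
    (hf_comp : ∀ {mu nu}, C.s mu = C.r nu → f (C.comp mu nu) = f mu * f nu)
    (hf_id : ∀ mu, f (C.r mu) = 1)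
    (hf_inv : ∀ m mu, f (β m mu) = f mu) :
    IsNormalisedCocycle Γ (fun p q => (f q.1) ^ (∑ i, p.2 i)) := by

  constructor
  · intro lam mu nu hlm hmn
    -- composability facts in Λ
    have hlm' : C.s lam.1 = C.r (β (natToInt lam.2) mu.1) := by
      have h := hlm
      rw [hΓ.s_eq, hΓ.r_eq] at h
      have h1 : β (-(natToInt lam.2)) (C.s lam.1) = C.r mu.1 := congrArg Prod.fst h
      have := congrArg (β (natToInt lam.2)) h1
      rw [← hβ.map_add, ← hβ.map_r] at this
      simpa [natToInt, hβ.map_zero] using this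
    have hmn' : C.s mu.1 = C.r (β (natToInt mu.2) nu.1) := by
      have h := hmn
      rw [hΓ.s_eq, hΓ.r_eq] at h
      have h1 : β (-(natToInt mu.2)) (C.s mu.1) = C.r nu.1 := congrArg Prod.fst h
      have := congrArg (β (natToInt mu.2)) h1
      rw [← hβ.map_add, ← hβ.map_r] at this
      simpa [natToInt, hβ.map_zero] using this
    rw [hΓ.comp_eq lam mu hlm, hΓ.comp_eq mu nu hmn]
    have hfmn : f (C.comp mu.1 (β (natToInt mu.2) nu.1))
        = f mu.1 * f nu.1 := by
      rw [hf_comp hmn', hf_inv]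
    simp only [hfmn]
    have hsum : (∑ i, (lam.2 + mu.2) i) = (∑ i, lam.2 i) + (∑ i, mu.2 i) := by
      simp [Finset.sum_add_distrib]
    rw [hsum, pow_add, mul_pow]
    exact (mul_assoc _ _ _).symm
  · constructor
    · intro lam
      rw [hΓ.s_eq]
      have : f (β (-(natToInt lam.2)) (C.s lam.1)) = 1 := by
        rw [hf_inv]
        have : C.s lam.1 = C.r (C.s lam.1) := (C.rs lam.1).symm
        rw [this, hf_id]
      simp [this]
    · intro lam
      rw [hΓ.r_eq]
      simp
end

section
/- Let Λ be a small category with degree functor d : Λ → ℕ^k, β an action of ℤ^l by automorphisms of Λ, and Γ = Λ ×_β ℤ^l the crossed-product category. If ω : ℕ^l → 𝕋 is a monoid homomorphism, then c_ω((μ,m),(ν,n)) := ω(m)^{|d(ν)|}, where |p| = Σᵢ pᵢ for p ∈ ℕ^k, is a normalised 𝕋-valued 2-cocycle on Γ. -/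
/-- Let `Λ` be a small category with degree functor `d : Λ → ℕ^k`,
`β` an action of `ℤ^l` by (degree-preserving) automorphisms of `Λ`, and
`Γ = Λ ×_β ℤ^l` the crossed-product category. If `ω : ℕ^l → 𝕋` is a monoid
homomorphism, then `c_ω((μ,m),(ν,n)) := ω(m)^{|d(ν)|}`, where `|p| = Σᵢ pᵢ`, is a
normalised `𝕋`-valued 2-cocycle on `Γ`. -/
theorem crossedProduct_cocycle_from_monoidHom
    {M : Type*} {k l : ℕ} (C : CategoryData M)
    -- the degree functor `d : Λ → ℕ^k`
    (d : M → Fin k → ℕ)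
    (hd_comp : ∀ {mu nu}, C.s mu = C.r nu → d (C.comp mu nu) = d mu + d nu)
    (hd_r : ∀ mu, d (C.r mu) = 0) (hd_s : ∀ mu, d (C.s mu) = 0)
    -- the action `β` of `ℤ^l` by degree-preserving automorphisms of `Λ`
    (β : (Fin l → ℤ) → M → M) (hβ : IsCatAction C β)
    (hβbij : ∀ m, Function.Bijective (β m))
    (hβd : ∀ m mu, d (β m mu) = d mu)
    -- the crossed-product category `Γ = Λ ×_β ℤ^l`
    (Γ : CategoryData (M × (Fin l → ℕ))) (hΓ : IsCrossedProduct C β Γ)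
    -- the monoid homomorphism `ω : ℕ^l → 𝕋`
    (ω : (Fin l → ℕ) → Circle)
    (hω_zero : ω 0 = 1) (hω_add : ∀ m n, ω (m + n) = ω m * ω n) :
    IsNormalisedCocycle Γ (fun p q => (ω p.2) ^ (∑ i, d q.1 i)) := by
  have hinv : ∀ (n : Fin l → ℕ) (x : M), β (natToInt n) (β (-(natToInt n)) x) = x := by
    intro n x
    rw [← hβ.map_add]
    simp [hβ.map_zero]
  refine ⟨?_, ?_, ?_⟩
  · rintro ⟨mu, m⟩ ⟨nu, n⟩ ⟨rho, p⟩ h1 h2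
    rw [hΓ.s_eq, hΓ.r_eq] at h1 h2
    simp only at h1 h2
    have h1' : C.s mu = C.r (β (natToInt m) nu) := by
      rw [hβ.map_r, ← congrArg (β (natToInt m)) (congrArg Prod.fst h1)]
      exact (hinv m _).symm
    have h2' : C.s nu = C.r (β (natToInt n) rho) := by
      rw [hβ.map_r, ← congrArg (β (natToInt n)) (congrArg Prod.fst h2)]
      exact (hinv n _).symm
    have hc1 : Γ.s (mu, m) = Γ.r (nu, n) := by
      rw [hΓ.s_eq, hΓ.r_eq]; exact h1
    have hc2 : Γ.s (nu, n) = Γ.r (rho, p) := by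
      rw [hΓ.s_eq, hΓ.r_eq]; exact h2
    rw [hΓ.comp_eq _ _ hc1, hΓ.comp_eq _ _ hc2]
    simp only
    have hd1 : d (C.comp nu (β (natToInt n) rho)) = d nu + d rho := by
      rw [hd_comp h2', hβd]
    rw [hd1]
    simp only [Pi.add_apply, Finset.sum_add_distrib, natToInt]
    rw [hω_add]
    rw [pow_add, mul_pow]
    rw [mul_assoc]
  · rintro ⟨mu, m⟩
    rw [hΓ.s_eq]
    simp only [hβd, hd_s, Pi.zero_apply, Finset.sum_const_zero, pow_zero]
  · rintro ⟨mu, m⟩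
    rw [hΓ.r_eq]
    simp [hω_zero]
end

section
/- Let E = (E⁰, E¹, r, s) be a topological graph (E⁰, E¹ locally compact Hausdorff, r continuous, s a local homeomorphism). Then the linear span of the set F_E of functions f ∈ C_c(E¹) whose support is contained in an open set U ⊆ E¹ on which s restricts to a homeomorphism onto s(U), is dense in the graph correspondence X(E) with respect to the Hilbert-module norm ‖f‖² = sup_{v ∈ E⁰} Σ_{e ∈ s⁻¹(v)} |f(e)|². -/
open scoped ENNReal

/-- Let `E = (E⁰, E¹, r, s)` be a topological graph (`E⁰`, `E¹`
locally compact Hausdorff, `r` continuous, `s` a local homeomorphism).  Then the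
linear span of the set `F_E` of functions `f ∈ C_c(E¹)` whose support is an
`s`-section (i.e. is contained in an open set on which `s` is injective, hence a
homeomorphism onto its image) is dense in the graph correspondence `X(E)` (the
completion of `C_c(E¹)`) with respect to the Hilbert-module norm
`‖f‖² = sup_{v ∈ E⁰} Σ_{e ∈ s⁻¹(v)} |f(e)|²`; equivalently, every `f ∈ C_c(E¹)`
can be approximated in this norm by elements of `span F_E`. -/
theorem span_sSection_functions_dense_in_graph_correspondence
    {E0 E1 : Type} [TopologicalSpace E0] [TopologicalSpace E1]
    [T2Space E0] [T2Space E1] [LocallyCompactSpace E0] [LocallyCompactSpace E1]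
    (r : E1 → E0) (s : E1 → E0)
    (hr : Continuous r) (hs : IsLocalHomeomorph s)
    (f : E1 → ℂ) (hf : Continuous f) (hfc : HasCompactSupport f)
    (ε : ℝ) (hε : 0 < ε) :
    ∃ g ∈ Submodule.span ℂ {g : E1 → ℂ | Continuous g ∧ HasCompactSupport g ∧
        ∃ U : Set E1, IsOpen U ∧ tsupport g ⊆ U ∧ Set.InjOn s U},
      (⨆ v : E0, ∑' e : {e : E1 // s e = v}, ((‖f e.1 - g e.1‖₊ : ℝ≥0∞)) ^ 2)
        ≤ ENNReal.ofReal (ε ^ 2) := by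
  -- Every point has an open neighborhood on which `s` is injective.
  have key : ∀ x : E1, ∃ U : Set E1, x ∈ U ∧ IsOpen U ∧ Set.InjOn s U := by
    intro x
    obtain ⟨e, hx, he⟩ := hs x
    exact ⟨e.source, hx, e.open_source, fun a ha b hb hab =>
      e.injOn ha hb (by subst he; exact hab)⟩
  -- choose such neighborhoods
  choose U hxU hUopen hUinj using key
  -- finite subcover of the compact support
  obtain ⟨t, ht⟩ := hfc.elim_finite_subcover U hUopen
    (fun x _ => Set.mem_iUnion.2 ⟨x, hxU x⟩)
  -- reindex by Fin n
  obtain ⟨n, eqv⟩ : ∃ n, Nonempty (Fin n ≃ {x // x ∈ t}) :=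
    ⟨t.card, ⟨(Finset.equivFin t).symm⟩⟩
  obtain ⟨e⟩ := eqv
  set V : Fin n → Set E1 := fun i => U (e i)
  have hVopen : ∀ i, IsOpen (V i) := fun i => hUopen _
  have hcov : tsupport f ⊆ ⋃ i, V i := by
    intro x hx
    obtain ⟨y, hy⟩ := Set.mem_iUnion.1 (ht hx)
    obtain ⟨hyt, hxy⟩ := Set.mem_iUnion.1 hy
    exact Set.mem_iUnion.2 ⟨e.symm ⟨y, hyt⟩, by simpa [V] using hxy⟩
  obtain ⟨φ, hφsupp, hφsum, hφmem, hφcp⟩ :=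
    exists_continuous_sum_one_of_isOpen_isCompact hVopen hfc hcov
  -- the approximant: g = ∑ i, φ i • f  (equals f)
  set g : E1 → ℂ := fun x => ∑ i, (φ i x : ℂ) * f x with hg
  have hgf : g = f := by
    funext x
    by_cases hx : x ∈ tsupport f
    · have := hφsum hx
      simp only [Finset.sum_apply, Pi.one_apply] at this
      simp only [g, ← Finset.sum_mul]
      rw [show (∑ i, ((φ i x : ℝ) : ℂ)) = ((∑ i, φ i x : ℝ) : ℂ) by push_cast; ring,
        this]
      simp
    · have : f x = 0 := image_eq_zero_of_notMem_tsupport hx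
      simp [g, this]
  refine ⟨g, ?_, ?_⟩
  · rw [hg]
    have : (fun x => ∑ i, (φ i x : ℂ) * f x) = ∑ i, fun x => (φ i x : ℂ) * f x := by
      funext x; simp
    rw [this]
    apply Submodule.sum_mem
    intro i _
    apply Submodule.subset_span
    refine ⟨by fun_prop, ?_, V i, hVopen i, ?_, hUinj _⟩
    · apply HasCompactSupport.mul_right
      exact (hφcp i).comp_left (g := Complex.ofReal) Complex.ofReal_zero
    · refine subset_trans (closure_minimal ?_ (isClosed_tsupport (φ i))) (hφsupp i)
      intro x hx
      simp only [Function.mem_support] at hx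
      apply subset_tsupport
      simp only [Function.mem_support]
      intro h0
      simp [h0] at hx
  · rw [hgf]
    simp
end

section
/- Let Λ be a proper, source-free topological k-graph. For each m, n ∈ ℕ^k with m ≤ n, the map τ_{m,n} : Λ^n → Λ^{n-m} defined by τ_{m,n}(λ) := λ(m,n) (the middle factorisation segment of λ of degree n−m starting at position m) is a local homeomorphism. -/
/-- A topological `k`-graph (Yeend): a small category, presented algebraically on
its (second-countable, locally compact, Hausdorff) space of morphisms with
objects identified with identity morphisms, together with a continuous degree
functor `d : Λ → ℕ^k` satisfying the unique factorisation property.  The range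
map is continuous, the source map is a local homeomorphism, and composition
(defined on the set of composable pairs) is continuous and open. -/
structure TopKGraph (k : ℕ) where
  M : Type
  ts : TopologicalSpace M
  t2 : @T2Space M ts
  lc : @LocallyCompactSpace M ts
  sc : @SecondCountableTopology M ts
  r : M → M
  s : M → M
  comp : M → M → M
  d : M → Fin k → ℕ
  rr : ∀ lam, r (r lam) = r lam
  sr : ∀ lam, s (r lam) = r lam
  rs : ∀ lam, r (s lam) = s lam
  ss' : ∀ lam, s (s lam) = s lam
  r_comp : ∀ {lam mu}, s lam = r mu → r (comp lam mu) = r lam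
  s_comp : ∀ {lam mu}, s lam = r mu → s (comp lam mu) = s mu
  comp_assoc : ∀ {lam mu nu}, s lam = r mu → s mu = r nu →
      comp (comp lam mu) nu = comp lam (comp mu nu)
  id_comp : ∀ lam, comp (r lam) lam = lam
  comp_id : ∀ lam, comp lam (s lam) = lam
  d_comp : ∀ {lam mu}, s lam = r mu → d (comp lam mu) = d lam + d mu
  d_r : ∀ lam, d (r lam) = 0
  d_s : ∀ lam, d (s lam) = 0
  continuous_r : @Continuous M M ts ts r
  continuous_s : @Continuous M M ts ts s
  isLocalHomeomorph_s : @IsLocalHomeomorph M M ts ts s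
  continuousOn_comp : @ContinuousOn (M × M) M (@instTopologicalSpaceProd M M ts ts) ts
      (fun p => comp p.1 p.2) {p | s p.1 = r p.2}
  isOpenMap_comp : ∀ V : Set (M × M), @IsOpen (M × M) (@instTopologicalSpaceProd M M ts ts) V →
      @IsOpen M ts ((fun p : M × M => comp p.1 p.2) '' (V ∩ {p | s p.1 = r p.2}))
  isOpen_deg : ∀ n : Fin k → ℕ, @IsOpen M ts {lam | d lam = n}
  factor : ∀ (lam : M) (m n : Fin k → ℕ), d lam = m + n →
      ∃! p : M × M, s p.1 = r p.2 ∧ comp p.1 p.2 = lam ∧ d p.1 = m ∧ d p.2 = n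

attribute [instance] TopKGraph.ts TopKGraph.t2 TopKGraph.lc TopKGraph.sc

variable {k : ℕ}

/-- An `s`-section: a set contained in an open set on which the source map is
injective (equivalently, since `s` is a local homeomorphism, on which `s`
restricts to a homeomorphism onto its image). -/
def TopKGraph.IsSSection (G : TopKGraph k) (W : Set G.M) : Prop :=
  ∃ U : Set G.M, IsOpen U ∧ W ⊆ U ∧ Set.InjOn G.s U

/-- A topological `k`-graph is proper if, for each `m ∈ ℕ^k`, the preimage under
`r|_{Λ^m}` of any compact set is compact. -/
def TopKGraph.Proper (G : TopKGraph k) : Prop :=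
  ∀ (m : Fin k → ℕ) (K : Set G.M), IsCompact K →
    IsCompact {lam : G.M | G.d lam = m ∧ G.r lam ∈ K}

/-- A topological `k`-graph is source-free if `vΛ^{e_i} ≠ ∅` for every vertex `v`
and every `i`. -/
def TopKGraph.SourceFree (G : TopKGraph k) : Prop :=
  ∀ v : G.M, G.r v = v → ∀ i : Fin k,
    ∃ lam : G.M, G.d lam = Pi.single i 1 ∧ G.r lam = v

/-- A normalised `𝕋`-valued 2-cocycle on a topological `k`-graph. -/
def TopKGraph.IsCocycle (G : TopKGraph k) (c : G.M → G.M → Circle) : Prop :=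
  (∀ lam mu nu, G.s lam = G.r mu → G.s mu = G.r nu →
      c lam mu * c (G.comp lam mu) nu = c lam (G.comp mu nu) * c mu nu) ∧
  (∀ lam, c lam (G.s lam) = 1) ∧ (∀ lam, c (G.r lam) lam = 1)

/-- A continuous normalised `𝕋`-valued 2-cocycle on a topological `k`-graph:
normalised, satisfies the cocycle identity, and is continuous on the set of
composable pairs. -/
def TopKGraph.IsContinuousCocycle (G : TopKGraph k) (c : G.M → G.M → Circle) : Prop :=
  G.IsCocycle c ∧
    ContinuousOn (fun p : G.M × G.M => c p.1 p.2) {p | G.s p.1 = G.r p.2}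
open scoped ENNReal ComplexConjugate

/-- The unique factorisation `lam = p.1 ⬝ p.2` of a path `lam` with `d(p.1) = m`
(meaningful whenever `m ≤ d lam`, by the unique factorisation property); thus
`(pathFac G m lam).1 = λ(0,m)` and, for `lam ∈ Λ^n`, `(pathFac G m lam).2 = λ(m,n)`. -/
noncomputable def TopKGraph.pathFac (G : TopKGraph k) (m : Fin k → ℕ) (lam : G.M) :
    G.M × G.M :=
  letI := Classical.propDecidable; if h : ∃ p : G.M × G.M, G.s p.1 = G.r p.2 ∧ G.comp p.1 p.2 = lam ∧
      G.d p.1 = m ∧ G.d p.2 = G.d lam - m then h.choose else (lam, lam)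

/-- An infinite path in `Λ`: a degree-preserving functor `x : Ω_k → Λ`, recorded
by its segments `x(m,n) ∈ Λ^{n-m}` for `m ≤ n` in `ℕ^k`. -/
structure TopKGraph.InfPath (G : TopKGraph k) where
  seg : (Fin k → ℕ) → (Fin k → ℕ) → G.M
  d_seg : ∀ {m n : Fin k → ℕ}, m ≤ n → G.d (seg m n) = n - m
  seg_id : ∀ m : Fin k → ℕ, seg m m = G.r (seg m m)
  s_seg : ∀ {m n p : Fin k → ℕ}, m ≤ n → n ≤ p → G.s (seg m n) = G.r (seg n p)
  comp_seg : ∀ {m n p : Fin k → ℕ}, m ≤ n → n ≤ p →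
      G.comp (seg m n) (seg n p) = seg m p

/-- The cylinder set `Z(U) = {x ∈ Λ^∞ : x(0,n) ∈ U for some n}`. -/
def TopKGraph.cyl (G : TopKGraph k) (U : Set G.M) : Set G.InfPath :=
  {x | ∃ n : Fin k → ℕ, x.seg 0 n ∈ U}

/-- The topology on the infinite-path space `Λ^∞` is generated by the cylinder
sets `Z(U)` of open subsets `U` of the `Λ^n`, `n ∈ ℕ^k`. -/
instance TopKGraph.instTopInfPath (G : TopKGraph k) : TopologicalSpace G.InfPath :=
  TopologicalSpace.generateFrom
    {S | ∃ (n : Fin k → ℕ) (U : Set G.M), IsOpen U ∧ (∀ lam ∈ U, G.d lam = n) ∧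
      S = G.cyl U}

/-- The shift map `T^p : Λ^∞ → Λ^∞`, `T^p(x)(m,n) = x(m+p, n+p)`. -/
def TopKGraph.shift (G : TopKGraph k) (p : Fin k → ℕ) (x : G.InfPath) : G.InfPath where
  seg m n := x.seg (m + p) (n + p)
  d_seg := by
    intro m n h
    rw [x.d_seg (add_le_add h (le_refl p))]
    funext i
    simp only [Pi.sub_apply, Pi.add_apply]
    omega
  seg_id m := x.seg_id (m + p)
  s_seg := fun h1 h2 => x.s_seg (add_le_add h1 (le_refl p)) (add_le_add h2 (le_refl p))
  comp_seg := fun h1 h2 => x.comp_seg (add_le_add h1 (le_refl p)) (add_le_add h2 (le_refl p))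

/-- Defining property of `pathFac` when a factorisation exists. -/
theorem TopKGraph.pathFac_spec' {k : ℕ} (G : TopKGraph k) {m : Fin k → ℕ} {lam : G.M}
    (hex : ∃ p : G.M × G.M, G.s p.1 = G.r p.2 ∧ G.comp p.1 p.2 = lam ∧
      G.d p.1 = m ∧ G.d p.2 = G.d lam - m) :
    G.s (G.pathFac m lam).1 = G.r (G.pathFac m lam).2 ∧
      G.comp (G.pathFac m lam).1 (G.pathFac m lam).2 = lam ∧
      G.d (G.pathFac m lam).1 = m ∧ G.d (G.pathFac m lam).2 = G.d lam - m := by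
  rw [TopKGraph.pathFac, dif_pos hex]
  exact hex.choose_spec

/-- Let `Λ` be a proper, source-free topological `k`-graph.  For
`m ≤ n` in `ℕ^k`, the map `τ_{m,n} : Λ^n → Λ^{n-m}`, `τ_{m,n}(λ) := λ(m,n)` (the
final segment of degree `n-m` in the factorisation `λ = λ(0,m)λ(m,n)`), is a
local homeomorphism (onto the clopen subset `Λ^{n-m}` of `Λ`). -/
theorem tau_isLocalHomeomorph {k : ℕ} (G : TopKGraph k)
    (hP : G.Proper) (hSF : G.SourceFree) (m n : Fin k → ℕ) (hmn : m ≤ n) :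
    IsLocalHomeomorph (fun lam : {lam : G.M // G.d lam = n} => (G.pathFac m lam.1).2) := by
  have hsub : m + (n - m) = n := funext fun i => Nat.add_sub_cancel' (hmn i)
  -- existence of factorisations for paths of degree `n`
  have hex : ∀ lam : G.M, G.d lam = n → ∃ p : G.M × G.M, G.s p.1 = G.r p.2 ∧
      G.comp p.1 p.2 = lam ∧ G.d p.1 = m ∧ G.d p.2 = G.d lam - m := by
    intro lam h
    obtain ⟨p, hp, -⟩ := G.factor lam m (n - m) (by rw [h]; exact hsub.symm)
    exact ⟨p, hp.1, hp.2.1, hp.2.2.1, by rw [h]; exact hp.2.2.2⟩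
  have hspec : ∀ lam : G.M, G.d lam = n →
      G.s (G.pathFac m lam).1 = G.r (G.pathFac m lam).2 ∧
      G.comp (G.pathFac m lam).1 (G.pathFac m lam).2 = lam ∧
      G.d (G.pathFac m lam).1 = m ∧ G.d (G.pathFac m lam).2 = n - m := by
    intro lam h
    obtain ⟨h1, h2, h3, h4⟩ := G.pathFac_spec' (hex lam h)
    rw [h] at h4
    exact ⟨h1, h2, h3, h4⟩
  have huniq : ∀ lam : G.M, G.d lam = n → ∀ q : G.M × G.M, G.s q.1 = G.r q.2 →
      G.comp q.1 q.2 = lam → G.d q.1 = m → G.d q.2 = n - m → G.pathFac m lam = q := by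
    intro lam h q hq1 hq2 hq3 hq4
    obtain ⟨h1, h2, h3, h4⟩ := hspec lam h
    obtain ⟨p, -, hup⟩ := G.factor lam m (n - m) (by rw [h]; exact hsub.symm)
    exact (hup _ ⟨h1, h2, h3, h4⟩).trans (hup q ⟨hq1, hq2, hq3, hq4⟩).symm
  intro x
  haveI : Nonempty {lam : G.M // G.d lam = n} := ⟨x⟩
  obtain ⟨hx1, hx2, hx3, hx4⟩ := hspec x.1 x.2
  obtain ⟨e, he0, hse⟩ := G.isLocalHomeomorph_s (G.pathFac m x.1).1
  set U : Set G.M := e.source ∩ {mu | G.d mu = m} with hU_def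
  have hUopen : IsOpen U := e.open_source.inter (G.isOpen_deg m)
  have hUsub : U ⊆ e.source := Set.inter_subset_left
  set V : Set G.M := (fun p : G.M × G.M => G.comp p.1 p.2) ''
      ((U ×ˢ {nu | G.d nu = n - m}) ∩ {p | G.s p.1 = G.r p.2}) with hV_def
  have hVopen : IsOpen V := G.isOpenMap_comp _ (hUopen.prod (G.isOpen_deg _))
  set W : Set G.M := {nu | G.d nu = n - m ∧ G.r nu ∈ ↑e '' U} with hW_def
  have hWopen : IsOpen W := (G.isOpen_deg (n - m)).inter
      ((e.isOpen_image_of_subset_source hUopen hUsub).preimage G.continuous_r)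
  -- key facts about `V`
  have hVprop : ∀ lam ∈ V, G.d lam = n ∧ (G.pathFac m lam).1 ∈ U ∧
      G.d (G.pathFac m lam).2 = n - m ∧
      G.s (G.pathFac m lam).1 = G.r (G.pathFac m lam).2 ∧
      G.comp (G.pathFac m lam).1 (G.pathFac m lam).2 = lam := by
    intro lam hlam
    obtain ⟨q, ⟨⟨hqU, hqd⟩, hqc⟩, hqe⟩ := hlam
    have hqd' : G.d q.2 = n - m := hqd
    have hqc' : G.s q.1 = G.r q.2 := hqc
    have hdq1 : G.d q.1 = m := hqU.2
    have hdlam : G.d lam = n := by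
      rw [← hqe]
      show G.d (G.comp q.1 q.2) = n
      rw [G.d_comp hqc', hdq1, hqd', hsub]
    have hpf : G.pathFac m lam = q := huniq lam hdlam q hqc' hqe hdq1 hqd'
    rw [hpf]
    exact ⟨hdlam, hqU, hqd', hqc', hqe⟩
  -- key facts about `W`
  have hWprop : ∀ nu ∈ W, e.symm (G.r nu) ∈ U ∧ G.s (e.symm (G.r nu)) = G.r nu ∧
      G.r nu ∈ e.target := by
    intro nu hnu
    obtain ⟨hd, mu, hmuU, hmue⟩ := hnu
    have h1 : e.symm (G.r nu) = mu := by rw [← hmue, e.left_inv (hUsub hmuU)]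
    have h2 : G.r nu ∈ e.target := by rw [← hmue]; exact e.map_source (hUsub hmuU)
    rw [h1]
    refine ⟨hmuU, ?_, h2⟩
    rw [hse]; exact hmue
  -- forward map sends `V` into `W`
  have hVW : ∀ lam ∈ V, (G.pathFac m lam).2 ∈ W := by
    intro lam hlam
    obtain ⟨-, hU1, hd2, hsr, -⟩ := hVprop lam hlam
    refine ⟨hd2, (G.pathFac m lam).1, hU1, ?_⟩
    rw [← hse]; exact hsr
  -- left inverse on `V`
  have hLeft : ∀ lam ∈ V,
      G.comp (e.symm (G.r (G.pathFac m lam).2)) (G.pathFac m lam).2 = lam := by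
    intro lam hlam
    obtain ⟨-, hU1, -, hsr, hcomp⟩ := hVprop lam hlam
    rw [← hsr, hse, e.left_inv (hUsub hU1)]
    exact hcomp
  -- backward map sends `W` into `V`, and right inverse
  have hWV : ∀ nu ∈ W, G.comp (e.symm (G.r nu)) nu ∈ V ∧
      (G.pathFac m (G.comp (e.symm (G.r nu)) nu)).2 = nu := by
    intro nu hnu
    obtain ⟨hmuU, hsmu, -⟩ := hWprop nu hnu
    have hd2 : G.d nu = n - m := hnu.1
    have hdm : G.d (e.symm (G.r nu)) = m := hmuU.2
    have hmemV : G.comp (e.symm (G.r nu)) nu ∈ V :=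
      ⟨(e.symm (G.r nu), nu), ⟨⟨hmuU, hd2⟩, hsmu⟩, rfl⟩
    have hdn : G.d (G.comp (e.symm (G.r nu)) nu) = n := by
      rw [G.d_comp hsmu, hdm, hd2, hsub]
    have := huniq _ hdn (e.symm (G.r nu), nu) hsmu rfl hdm hd2
    exact ⟨hmemV, by rw [this]⟩
  -- images of open subsets of `W` under the backward map are open
  have hσopen : ∀ O : Set G.M, IsOpen O →
      IsOpen ((fun nu => G.comp (e.symm (G.r nu)) nu) '' (O ∩ W)) := by
    intro O hO
    have himg : (fun nu => G.comp (e.symm (G.r nu)) nu) '' (O ∩ W) =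
        (fun p : G.M × G.M => G.comp p.1 p.2) ''
          ((e.source ×ˢ (O ∩ W)) ∩ {p | G.s p.1 = G.r p.2}) := by
      ext y
      constructor
      · rintro ⟨nu, hnu, rfl⟩
        obtain ⟨hmuU, hsmu, hrt⟩ := hWprop nu hnu.2
        exact ⟨(e.symm (G.r nu), nu), ⟨⟨e.map_target hrt, hnu⟩, hsmu⟩, rfl⟩
      · rintro ⟨q, ⟨⟨hq1, hq2⟩, hqc⟩, rfl⟩
        have hqc' : G.s q.1 = G.r q.2 := hqc
        have h2 : e.symm (G.r q.2) = q.1 := by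
          rw [← hqc', hse, e.left_inv hq1]
        refine ⟨q.2, hq2, ?_⟩
        show G.comp (e.symm (G.r q.2)) q.2 = G.comp q.1 q.2
        rw [h2]
    rw [himg]
    exact G.isOpenMap_comp _ (e.open_source.prod (hO.inter hWopen))
  -- continuity of the forward map on `V`
  have hτcont : ContinuousOn (fun lam => (G.pathFac m lam).2) V := by
    rw [continuousOn_iff]
    intro lam hlam t ht hft
    refine ⟨(fun nu => G.comp (e.symm (G.r nu)) nu) '' (t ∩ W), hσopen t ht, ?_, ?_⟩
    · exact ⟨(G.pathFac m lam).2, ⟨hft, hVW lam hlam⟩, hLeft lam hlam⟩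
    · rintro y ⟨⟨nu, ⟨hnut, hnuW⟩, rfl⟩, -⟩
      show (G.pathFac m (G.comp (e.symm (G.r nu)) nu)).2 ∈ t
      rw [(hWV nu hnuW).2]
      exact hnut
  -- continuity of the backward map on `W`
  have hσcont : ContinuousOn (fun nu => G.comp (e.symm (G.r nu)) nu) W := by
    have hmaps : Set.MapsTo G.r W e.target := fun nu hnu => (hWprop nu hnu).2.2
    have h1 : ContinuousOn (fun nu => (e.symm (G.r nu), nu)) W :=
      ContinuousOn.prodMk (e.continuousOn_symm.comp G.continuous_r.continuousOn hmaps) continuousOn_id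
    have hmaps2 : Set.MapsTo (fun nu => (e.symm (G.r nu), nu)) W
        {p : G.M × G.M | G.s p.1 = G.r p.2} := fun nu hnu => (hWprop nu hnu).2.1
    exact G.continuousOn_comp.comp h1 hmaps2
  -- assemble the partial homeomorphism `Λ ⊇ V → W`
  set pe : OpenPartialHomeomorph G.M G.M :=
    { toFun := fun lam => (G.pathFac m lam).2
      invFun := fun nu => G.comp (e.symm (G.r nu)) nu
      source := V
      target := W
      map_source' := hVW
      map_target' := fun nu hnu => (hWV nu hnu).1
      left_inv' := hLeft
      right_inv' := fun nu hnu => (hWV nu hnu).2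
      open_source := hVopen
      open_target := hWopen
      continuousOn_toFun := hτcont
      continuousOn_invFun := hσcont } with hpe_def
  -- the inclusion of the open set `Λ^n` as a partial homeomorphism
  have hnopen : IsOpen {lam : G.M | G.d lam = n} := G.isOpen_deg n
  set valPE : OpenPartialHomeomorph {lam : G.M // G.d lam = n} G.M :=
    Topology.IsOpenEmbedding.toOpenPartialHomeomorph Subtype.val
      hnopen.isOpenEmbedding_subtypeVal with hval_def
  have hxV : x.1 ∈ V :=
    ⟨G.pathFac m x.1, ⟨⟨⟨he0, hx3⟩, hx4⟩, hx1⟩, hx2⟩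
  refine ⟨valPE.trans pe, ?_, ?_⟩
  · rw [OpenPartialHomeomorph.trans_source]
    refine ⟨by simp [hval_def], ?_⟩
    show valPE x ∈ pe.source
    simpa [hval_def] using hxV
  · rw [OpenPartialHomeomorph.coe_trans]
    funext lam
    show (G.pathFac m lam.1).2 = pe (valPE lam)
    simp [hval_def, hpe_def]
end

section
/- Let Λ be a proper, source-free topological k-graph, A a locally compact group, and f : Λ → A a continuous functor. Then the skew-product topological k-graph Λ ×_f A is proper and source-free. -/
variable {k : ℕ}

open scoped ENNReal ComplexConjugate

/-- Let `Λ` be a proper, source-free topological `k`-graph, `A`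
a locally compact group, and `f : Λ → A` a continuous functor.  Then the
skew-product topological `k`-graph `Λ ×_f A` — with morphisms `Λ × A`, range
`r(μ,a) = (r(μ),a)`, source `s(μ,a) = (s(μ), a·f(μ))` and degree
`d(μ,a) = d(μ)` — is proper and source-free. -/
theorem skewProduct_proper_sourceFree {k : ℕ} (G : TopKGraph k)
    (hP : G.Proper) (hSF : G.SourceFree)
    (A : Type) [Group A] [TopologicalSpace A] [IsTopologicalGroup A]
    [T2Space A] [LocallyCompactSpace A]
    (f : G.M → A) (hf_cont : Continuous f)
    (hf_comp : ∀ {mu nu}, G.s mu = G.r nu → f (G.comp mu nu) = f mu * f nu)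
    (hf_id : ∀ mu, f (G.r mu) = 1) :
    -- the skew product is proper:
    (∀ (m : Fin k → ℕ) (K : Set (G.M × A)), IsCompact K →
      IsCompact {p : G.M × A | G.d p.1 = m ∧ (G.r p.1, p.2) ∈ K}) ∧
    -- and source-free:
    (∀ v : G.M × A, G.r v.1 = v.1 → ∀ i : Fin k,
      ∃ p : G.M × A, G.d p.1 = Pi.single i 1 ∧ (G.r p.1, p.2) = v) := by
  constructor
  · intro m K hK
    have h1 : IsCompact (Prod.fst '' K) := hK.image continuous_fst
    have h2 : IsCompact (Prod.snd '' K) := hK.image continuous_snd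
    have hL : IsCompact ({lam : G.M | G.d lam = m ∧ G.r lam ∈ Prod.fst '' K} ×ˢ
        (Prod.snd '' K)) := (hP m _ h1).prod h2
    apply hL.of_isClosed_subset
    · have hc1 : IsClosed {p : G.M × A | G.d p.1 = m} := by
        rw [← isOpen_compl_iff]
        have : {p : G.M × A | G.d p.1 = m}ᶜ =
            (⋃ n ∈ {n : Fin k → ℕ | n ≠ m}, {lam | G.d lam = n}) ×ˢ Set.univ := by
          ext p
          simp [Set.mem_iUnion]
        rw [this]
        exact (isOpen_biUnion fun n _ => G.isOpen_deg n).prod isOpen_univ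
      have hc2 : IsClosed ((fun p : G.M × A => (G.r p.1, p.2)) ⁻¹' K) :=
        hK.isClosed.preimage ((G.continuous_r.comp continuous_fst).prodMk continuous_snd)
      exact hc1.inter hc2
    · rintro ⟨lam, a⟩ ⟨hd, hr⟩
      exact ⟨⟨hd, ⟨(G.r lam, a), hr, rfl⟩⟩, ⟨(G.r lam, a), hr, rfl⟩⟩
  · rintro ⟨v, a⟩ hv i
    obtain ⟨lam, hd, hr⟩ := hSF v hv i
    exact ⟨(lam, a), hd, by simp [hr]⟩
end

section
/- Let Λ be a proper, source-free topological k-graph, and for each n ∈ ℕ^k let α_n : X_n → Y_n be the map α_n(f)(x) = f(x(0,n)) on finitely supported continuous functions, extended by continuity. Then each α_n is injective: if f₁, f₂ ∈ X_n satisfy α_n(f₁) = α_n(f₂), then f₁ = f₂. -/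
variable {k : ℕ}

open scoped ENNReal ComplexConjugate

namespace TopKGraph

variable {k : ℕ} (G : TopKGraph k)

lemma pathFac_exu {lam : G.M} {m : Fin k → ℕ} (hm : m ≤ G.d lam) :
    ∃! p : G.M × G.M, G.s p.1 = G.r p.2 ∧ G.comp p.1 p.2 = lam ∧
      G.d p.1 = m ∧ G.d p.2 = G.d lam - m := by
  have h : G.d lam = m + (G.d lam - m) := by
    funext i; have h1 : m i ≤ G.d lam i := hm i
    simp only [Pi.add_apply, Pi.sub_apply]; omega
  exact G.factor lam m (G.d lam - m) h

lemma pathFac_spec {lam : G.M} {m : Fin k → ℕ} (hm : m ≤ G.d lam) :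
    G.s (G.pathFac m lam).1 = G.r (G.pathFac m lam).2 ∧
      G.comp (G.pathFac m lam).1 (G.pathFac m lam).2 = lam ∧
      G.d (G.pathFac m lam).1 = m ∧ G.d (G.pathFac m lam).2 = G.d lam - m := by
  have hE := (G.pathFac_exu hm).exists
  rw [pathFac]
  simp only [hE, dif_pos]
  exact hE.choose_spec

lemma pathFac_eq {lam a b : G.M} (hs : G.s a = G.r b) (hc : G.comp a b = lam) :
    G.pathFac (G.d a) lam = (a, b) := by
  have hd : G.d lam = G.d a + G.d b := by rw [← hc, G.d_comp hs]
  have hm : G.d a ≤ G.d lam := fun i => by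
    rw [hd]; exact Nat.le_add_right _ _
  have hsp := G.pathFac_spec hm
  have hdb : G.d b = G.d lam - G.d a := by
    funext i; rw [hd]; simp only [Pi.sub_apply, Pi.add_apply]; omega
  exact ((G.pathFac_exu hm).unique (y₁ := (a, b)) (y₂ := G.pathFac (G.d a) lam)
    ⟨hs, hc, rfl, hdb⟩ ⟨hsp.1, hsp.2.1, hsp.2.2.1, hsp.2.2.2⟩).symm

lemma pathFac_zero (lam : G.M) : G.pathFac 0 lam = (G.r lam, lam) := by
  have := G.pathFac_eq (a := G.r lam) (b := lam) (by rw [G.sr]) (G.id_comp lam)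
  rwa [G.d_r] at this

lemma pathFac_top (lam : G.M) : G.pathFac (G.d lam) lam = (lam, G.s lam) := by
  exact G.pathFac_eq (by rw [G.rs]) (G.comp_id lam)

lemma eq_r_of_d_zero {lam : G.M} (h0 : G.d lam = 0) : lam = G.r lam := by
  have h1 := G.pathFac_zero lam
  have h2 := G.pathFac_top lam
  rw [h0] at h2
  have := h1.symm.trans h2
  exact (congrArg Prod.fst this).symm

/-- The middle segment `λ(m,p)` of a path. -/
noncomputable def mid (m p : Fin k → ℕ) (lam : G.M) : G.M :=
  (G.pathFac (p - m) (G.pathFac m lam).2).1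

lemma sub_le_sub_d {m p : Fin k → ℕ} {lam : G.M} (hm : m ≤ p) (hp : p ≤ G.d lam) :
    p - m ≤ G.d ((G.pathFac m lam).2) := by
  have h2 := (G.pathFac_spec (le_trans hm hp)).2.2.2
  intro i
  rw [h2]
  have h3 : m i ≤ p i := hm i
  have h4 : p i ≤ G.d lam i := hp i
  simp only [Pi.sub_apply]; omega

lemma d_mid {m p : Fin k → ℕ} {lam : G.M} (hm : m ≤ p) (hp : p ≤ G.d lam) :
    G.d (G.mid m p lam) = p - m :=
  (G.pathFac_spec (G.sub_le_sub_d hm hp)).2.2.1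

lemma mid_self {m : Fin k → ℕ} {lam : G.M} (hp : m ≤ G.d lam) :
    G.mid m m lam = G.r (G.mid m m lam) := by
  apply G.eq_r_of_d_zero
  rw [G.d_mid le_rfl hp]
  funext i; simp

lemma r_mid {m p : Fin k → ℕ} {lam : G.M} (hm : m ≤ p) (hp : p ≤ G.d lam) :
    G.r (G.mid m p lam) = G.r ((G.pathFac m lam).2) := by
  have hsp := G.pathFac_spec (G.sub_le_sub_d hm hp)
  unfold mid
  rw [← G.r_comp hsp.1, hsp.2.1]

lemma pathFac_split {m p : Fin k → ℕ} {lam : G.M} (hm : m ≤ p) (hp : p ≤ G.d lam) :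
    G.pathFac p lam =
      (G.comp (G.pathFac m lam).1 (G.mid m p lam),
        (G.pathFac (p - m) (G.pathFac m lam).2).2) := by
  have hsp1 := G.pathFac_spec (le_trans hm hp)
  have hsp2 := G.pathFac_spec (G.sub_le_sub_d hm hp)
  set u := (G.pathFac m lam).1
  set w := (G.pathFac m lam).2
  set a := (G.pathFac (p - m) w).1
  set b := (G.pathFac (p - m) w).2
  have hra : G.r w = G.r a := by rw [← hsp2.2.1, G.r_comp hsp2.1]
  have hsu : G.s u = G.r a := hsp1.1.trans hra
  have hcomp : G.comp (G.comp u a) b = lam := by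
    rw [G.comp_assoc hsu hsp2.1, hsp2.2.1, hsp1.2.1]
  have hsc : G.s (G.comp u a) = G.r b := by rw [G.s_comp hsu]; exact hsp2.1
  have hdua : G.d (G.comp u a) = p := by
    rw [G.d_comp hsu, hsp1.2.2.1, hsp2.2.2.1]
    funext i; have h1 : m i ≤ p i := hm i
    simp only [Pi.add_apply, Pi.sub_apply]; omega
  have := G.pathFac_eq hsc hcomp
  rw [hdua] at this
  exact this

lemma pathFac_comp_left {a b : G.M} {q : Fin k → ℕ} (hs : G.s a = G.r b)
    (hq : q ≤ G.d a) :
    G.pathFac q (G.comp a b) = ((G.pathFac q a).1, G.comp (G.pathFac q a).2 b) := by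
  have hsp := G.pathFac_spec hq
  set u := (G.pathFac q a).1
  set w := (G.pathFac q a).2
  have hsw : G.s w = G.r b := by
    rw [← hs, ← hsp.2.1, G.s_comp hsp.1]
  have hsu : G.s u = G.r (G.comp w b) := by rw [G.r_comp hsw]; exact hsp.1
  have hcomp : G.comp u (G.comp w b) = G.comp a b := by
    rw [← G.comp_assoc hsp.1 hsw, hsp.2.1]
  have := G.pathFac_eq hsu hcomp
  rwa [hsp.2.2.1] at this

lemma mid_comp_left {a b : G.M} {m p : Fin k → ℕ} (hs : G.s a = G.r b)
    (hm : m ≤ p) (hp : p ≤ G.d a) :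
    G.mid m p (G.comp a b) = G.mid m p a := by
  have hsp := G.pathFac_spec (le_trans hm hp)
  have hsw : G.s ((G.pathFac m a).2) = G.r b := by
    rw [← G.s_comp hsp.1, hsp.2.1, hs]
  unfold mid
  rw [G.pathFac_comp_left hs (le_trans hm hp)]
  simp only
  rw [G.pathFac_comp_left hsw (G.sub_le_sub_d hm hp)]

lemma s_mid {m p q : Fin k → ℕ} {lam : G.M} (hm : m ≤ p) (hp : p ≤ q)
    (hq : q ≤ G.d lam) :
    G.s (G.mid m p lam) = G.r (G.mid p q lam) := by
  have hpd : p ≤ G.d lam := le_trans hp hq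
  have hsp2 := G.pathFac_spec (G.sub_le_sub_d hm hpd)
  rw [G.r_mid hp hq]
  unfold mid
  rw [hsp2.1, G.pathFac_split hm hpd]

lemma comp_mid {m p q : Fin k → ℕ} {lam : G.M} (hm : m ≤ p) (hp : p ≤ q)
    (hq : q ≤ G.d lam) :
    G.comp (G.mid m p lam) (G.mid p q lam) = G.mid m q lam := by
  have hpd : p ≤ G.d lam := le_trans hp hq
  have hw : p - m ≤ q - m := fun i => by
    have h1 : m i ≤ p i := hm i
    have h2 : p i ≤ q i := hp i
    simp only [Pi.sub_apply]; omega
  have hwd : q - m ≤ G.d ((G.pathFac m lam).2) := G.sub_le_sub_d (le_trans hm hp) hq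
  have h2 : (G.pathFac (p - m) (G.pathFac m lam).2).2 = (G.pathFac p lam).2 := by
    rw [G.pathFac_split hm hpd]
  have hidx : q - m - (p - m) = q - p := by
    funext i
    have h1 : m i ≤ p i := hm i
    have h3 : p i ≤ q i := hp i
    simp only [Pi.sub_apply]; omega
  have hsplit := congrArg Prod.fst (G.pathFac_split (lam := (G.pathFac m lam).2) hw hwd)
  simp only at hsplit
  unfold mid
  rw [hsplit]
  simp only [mid]
  rw [hidx, h2]


lemma exists_ext (hSF : G.SourceFree) :
    ∀ (N : ℕ) (p : Fin k → ℕ), (∑ i, p i) ≤ N → ∀ v : G.M, G.r v = v →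
      ∃ c : G.M, G.r c = v ∧ p ≤ G.d c := by
  intro N
  induction N with
  | zero =>
    intro p hp v hv
    refine ⟨v, hv, fun i => ?_⟩
    have h1 : p i ≤ ∑ j, p j :=
      Finset.single_le_sum (f := p) (fun j _ => Nat.zero_le _) (Finset.mem_univ i)
    have : p i = 0 := by omega
    rw [this]; exact Nat.zero_le _
  | succ N ih =>
    intro p hp v hv
    by_cases hz : ∀ i, p i = 0
    · exact ⟨v, hv, fun i => by rw [hz i]; exact Nat.zero_le _⟩
    · push_neg at hz
      obtain ⟨i, hi⟩ := hz
      obtain ⟨lam, hd, hr⟩ := hSF v hv i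
      have hsum : (∑ j, (p - Pi.single i 1 : Fin k → ℕ) j) ≤ N := by
        have hlt : (∑ j, (p - Pi.single i 1 : Fin k → ℕ) j) < ∑ j, p j :=
          Finset.sum_lt_sum (fun j _ => by simp only [Pi.sub_apply]; exact Nat.sub_le _ _)
            ⟨i, Finset.mem_univ i, by
              simp only [Pi.sub_apply, Pi.single_eq_same]; omega⟩
        omega
      obtain ⟨c, hrc, hdc⟩ := ih (p - Pi.single i 1) hsum (G.s lam) (G.rs lam)
      have hcomp : G.s lam = G.r c := hrc.symm
      refine ⟨G.comp lam c, by rw [G.r_comp hcomp]; exact hr, fun j => ?_⟩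
      have hdcj := hdc j
      rw [G.d_comp hcomp, hd]
      simp only [Pi.add_apply]
      simp only [Pi.sub_apply] at hdcj
      rcases eq_or_ne j i with rfl | hne
      · simp only [Pi.single_eq_same] at *; omega
      · simp only [Pi.single_eq_of_ne hne] at *; omega

/-- A chosen morphism of degree `≥ (1,…,1)` with range `v`. -/
noncomputable def stepEx (hSF : G.SourceFree) (v : G.M) : G.M :=
  letI := Classical.propDecidable
  if hv : G.r v = v then
    (G.exists_ext hSF (∑ i, (1 : Fin k → ℕ) i) 1 le_rfl v hv).choose
  else v

lemma stepEx_spec (hSF : G.SourceFree) {v : G.M} (hv : G.r v = v) :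
    G.r (G.stepEx hSF v) = v ∧ (1 : Fin k → ℕ) ≤ G.d (G.stepEx hSF v) := by
  rw [stepEx]
  rw [dif_pos hv]
  exact (G.exists_ext hSF _ 1 le_rfl v hv).choose_spec

/-- The chosen extension of `lam` to arbitrarily large degree. -/
noncomputable def fullPath (hSF : G.SourceFree) (lam : G.M) : ℕ → G.M
  | 0 => lam
  | j + 1 =>
      G.comp (fullPath hSF lam j) (G.stepEx hSF (G.s (fullPath hSF lam j)))

lemma fullPath_comp_s (hSF : G.SourceFree) (lam : G.M) (j : ℕ) :
    G.s (G.fullPath hSF lam j) = G.r (G.stepEx hSF (G.s (G.fullPath hSF lam j))) :=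
  ((G.stepEx_spec hSF (G.rs _)).1).symm

lemma d_fullPath_succ (hSF : G.SourceFree) (lam : G.M) (j : ℕ) :
    G.d (G.fullPath hSF lam (j + 1)) =
      G.d (G.fullPath hSF lam j) +
        G.d (G.stepEx hSF (G.s (G.fullPath hSF lam j))) := by
  show G.d (G.comp _ _) = _
  exact G.d_comp (G.fullPath_comp_s hSF lam j)

lemma d_fullPath_mono (hSF : G.SourceFree) (lam : G.M) {j j' : ℕ} (h : j ≤ j') :
    G.d (G.fullPath hSF lam j) ≤ G.d (G.fullPath hSF lam j') := by
  induction j', h using Nat.le_induction with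
  | base => exact le_rfl
  | succ j' hj ih =>
    refine le_trans ih fun i => ?_
    rw [G.d_fullPath_succ hSF lam j']
    simp only [Pi.add_apply]
    exact Nat.le_add_right _ _

lemma le_d_fullPath (hSF : G.SourceFree) (lam : G.M) (j : ℕ) (i : Fin k) :
    j ≤ G.d (G.fullPath hSF lam j) i := by
  induction j with
  | zero => exact Nat.zero_le _
  | succ j ih =>
    rw [G.d_fullPath_succ hSF lam j]
    have h1 := (G.stepEx_spec hSF (G.rs (G.fullPath hSF lam j))).2 i
    simp only [Pi.add_apply, Pi.one_apply] at *
    omega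

lemma mid_fullPath_stable (hSF : G.SourceFree) (lam : G.M) {m p : Fin k → ℕ}
    {j j' : ℕ} (hm : m ≤ p) (hp : p ≤ G.d (G.fullPath hSF lam j)) (hj : j ≤ j') :
    G.mid m p (G.fullPath hSF lam j') = G.mid m p (G.fullPath hSF lam j) := by
  induction j', hj using Nat.le_induction with
  | base => rfl
  | succ j' hj ih =>
    rw [← ih]
    show G.mid m p (G.comp _ _) = _
    exact G.mid_comp_left (G.fullPath_comp_s hSF lam j') hm
      (le_trans hp (G.d_fullPath_mono hSF lam hj))

lemma le_d_fullPath_sum (hSF : G.SourceFree) (lam : G.M) (p : Fin k → ℕ) :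
    p ≤ G.d (G.fullPath hSF lam (∑ i, p i)) := fun i =>
  le_trans (Finset.single_le_sum (f := p) (fun j _ => Nat.zero_le _) (Finset.mem_univ i))
    (G.le_d_fullPath hSF lam _ i)

/-- The chosen infinite path extending `lam`. -/
noncomputable def thePath (hSF : G.SourceFree) (lam : G.M) : G.InfPath where
  seg m p := G.mid m p (G.fullPath hSF lam (∑ i, p i))
  d_seg := by
    intro m p h
    exact G.d_mid h (G.le_d_fullPath_sum hSF lam p)
  seg_id := by
    intro m
    exact G.mid_self (G.le_d_fullPath_sum hSF lam m)
  s_seg := by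
    intro m nn p h1 h2
    beta_reduce
    have hB1 : (∑ i, nn i) ≤ (∑ i, nn i) + (∑ i, p i) := Nat.le_add_right _ _
    have hB2 : (∑ i, p i) ≤ (∑ i, nn i) + (∑ i, p i) := Nat.le_add_left _ _
    rw [← G.mid_fullPath_stable hSF lam h1 (G.le_d_fullPath_sum hSF lam nn) hB1,
      ← G.mid_fullPath_stable hSF lam h2 (G.le_d_fullPath_sum hSF lam p) hB2]
    exact G.s_mid h1 h2
      (le_trans (G.le_d_fullPath_sum hSF lam p) (G.d_fullPath_mono hSF lam hB2))
  comp_seg := by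
    intro m nn p h1 h2
    beta_reduce
    have hB1 : (∑ i, nn i) ≤ (∑ i, nn i) + (∑ i, p i) := Nat.le_add_right _ _
    have hB2 : (∑ i, p i) ≤ (∑ i, nn i) + (∑ i, p i) := Nat.le_add_left _ _
    rw [← G.mid_fullPath_stable hSF lam h1 (G.le_d_fullPath_sum hSF lam nn) hB1,
      ← G.mid_fullPath_stable hSF lam h2 (G.le_d_fullPath_sum hSF lam p) hB2,
      ← G.mid_fullPath_stable hSF lam (le_trans h1 h2)
        (G.le_d_fullPath_sum hSF lam p) hB2]
    exact G.comp_mid h1 h2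
      (le_trans (G.le_d_fullPath_sum hSF lam p) (G.d_fullPath_mono hSF lam hB2))

lemma mid_zero_left (p : Fin k → ℕ) (mu : G.M) :
    G.mid 0 p mu = (G.pathFac p mu).1 := by
  unfold mid
  rw [G.pathFac_zero]
  simp

lemma pathFac_fullPath_fst (hSF : G.SourceFree) (lam : G.M) (j : ℕ) :
    (G.pathFac (G.d lam) (G.fullPath hSF lam j)).1 = lam := by
  induction j with
  | zero =>
    show (G.pathFac (G.d lam) lam).1 = lam
    rw [G.pathFac_top]
  | succ j ih =>
    have hle : G.d lam ≤ G.d (G.fullPath hSF lam j) :=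
      G.d_fullPath_mono hSF lam (Nat.zero_le j)
    show (G.pathFac (G.d lam) (G.comp _ _)).1 = lam
    rw [G.pathFac_comp_left (G.fullPath_comp_s hSF lam j) hle]
    exact ih

lemma thePath_seg (hSF : G.SourceFree) (lam : G.M) :
    (G.thePath hSF lam).seg 0 (G.d lam) = lam := by
  show G.mid 0 (G.d lam) (G.fullPath hSF lam (∑ i, G.d lam i)) = lam
  rw [G.mid_zero_left, G.pathFac_fullPath_fst]

end TopKGraph
/-- Let `Λ` be a proper, source-free topological `k`-graph.  The
map `α_n : X_n → Y_n`, `α_n(f)(x) = f(x(0,n))`, is injective: if `f₁, f₂ ∈ X_n`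
satisfy `α_n(f₁) = α_n(f₂)` then `f₁ = f₂`. -/
theorem alpha_injective {k : ℕ} (G : TopKGraph k)
    (hP : G.Proper) (hSF : G.SourceFree) (n : Fin k → ℕ)
    (f₁ f₂ : G.M → ℂ)
    (hf₁ : Continuous f₁) (hf₁c : HasCompactSupport f₁)
    (hf₁d : ∀ lam, f₁ lam ≠ 0 → G.d lam = n)
    (hf₂ : Continuous f₂) (hf₂c : HasCompactSupport f₂)
    (hf₂d : ∀ lam, f₂ lam ≠ 0 → G.d lam = n)
    (h : ∀ x : G.InfPath, f₁ (x.seg 0 n) = f₂ (x.seg 0 n)) :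
    f₁ = f₂ := by
  funext lam
  by_cases hd : G.d lam = n
  · have key := h (G.thePath hSF lam)
    rw [← hd] at key
    rwa [G.thePath_seg hSF lam] at key
  · have h1 : f₁ lam = 0 := by by_contra hc; exact hd (hf₁d lam hc)
    have h2 : f₂ lam = 0 := by by_contra hc; exact hd (hf₂d lam hc)
    rw [h1, h2]
end
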